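/- Fix c₁ > 0 and define φ(v) := 1/4 + v·cot(c₁·v) − v² for v ∈ (0, π/c₁). Then φ is strictly decreasing on (0, π/c₁); φ(v) → 1/4 + 1/c₁ as v → 0⁺; and φ(v) → −∞ as v → (π/c₁)⁻. Consequently, for each real u with u² < 1/4 + 1/c₁ there is exactly one v ∈ (0, π/c₁) with u² = φ(v), and for u² ≥ 1/4 + 1/c₁ there is none. -/

import Mathlib

open Filter Set

/-- The function `φ(v) = 1/4 + v·cot(c₁v) − v²` is strictly decreasing on
`(0, π/c₁)`, tends to `1/4 + 1/c₁` at `0⁺` and to `−∞` at `(π/c₁)⁻`; hence for `u² < 1/4 + 1/c₁`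
the equation `u² = φ(v)` has exactly one solution `v ∈ (0, π/c₁)`, and for `u² ≥ 1/4 + 1/c₁` it
has none. -/
theorem phi_strictly_decreasing (c₁ : ℝ) (hc₁ : 0 < c₁) :
    StrictAntiOn (fun v : ℝ => 1/4 + v * Real.cot (c₁ * v) - v ^ 2) (Ioo 0 (Real.pi / c₁)) ∧
    Tendsto (fun v : ℝ => 1/4 + v * Real.cot (c₁ * v) - v ^ 2) (nhdsWithin 0 (Ioi 0))
      (nhds (1/4 + 1/c₁)) ∧
    Tendsto (fun v : ℝ => 1/4 + v * Real.cot (c₁ * v) - v ^ 2)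
      (nhdsWithin (Real.pi / c₁) (Iio (Real.pi / c₁))) atBot ∧
    (∀ u : ℝ, u ^ 2 < 1/4 + 1/c₁ →
      ∃! v : ℝ, v ∈ Ioo 0 (Real.pi / c₁) ∧ u ^ 2 = 1/4 + v * Real.cot (c₁ * v) - v ^ 2) ∧
    (∀ u : ℝ, 1/4 + 1/c₁ ≤ u ^ 2 →
      ¬ ∃ v : ℝ, v ∈ Ioo 0 (Real.pi / c₁) ∧ u ^ 2 = 1/4 + v * Real.cot (c₁ * v) - v ^ 2) := by
  have hπ : 0 < Real.pi / c₁ := div_pos Real.pi_pos hc₁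
  set f : ℝ → ℝ := fun v => 1/4 + v * Real.cot (c₁ * v) - v ^ 2 with hfdef
  have hfg : f = fun v : ℝ => 1/4 + v * (Real.cos (c₁ * v) / Real.sin (c₁ * v)) - v ^ 2 := by
    funext v; simp [hfdef, Real.cot_eq_cos_div_sin]
  have hsin : ∀ v ∈ Ioo (0:ℝ) (Real.pi / c₁), 0 < Real.sin (c₁ * v) := by
    intro v hv
    apply Real.sin_pos_of_pos_of_lt_pi (mul_pos hc₁ hv.1)
    calc c₁ * v < c₁ * (Real.pi / c₁) := (mul_lt_mul_iff_right₀ hc₁).2 hv.2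
    _ = Real.pi := mul_div_cancel₀ _ hc₁.ne'
  -- derivative
  have hderiv : ∀ v ∈ Ioo (0:ℝ) (Real.pi / c₁),
      HasDerivAt f ((1 * (Real.cos (c₁ * v) / Real.sin (c₁ * v)) +
        v * ((-Real.sin (c₁ * v) * c₁ * Real.sin (c₁ * v) -
          Real.cos (c₁ * v) * (Real.cos (c₁ * v) * c₁)) / Real.sin (c₁ * v) ^ 2))
        - (2 : ℕ) * v ^ (2 - 1)) v := by
    intro v hv
    have hs := (hsin v hv).ne'
    have h1 : HasDerivAt (fun v : ℝ => c₁ * v) c₁ v := by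
      simpa using (hasDerivAt_id v).const_mul c₁
    have hcos : HasDerivAt (fun v : ℝ => Real.cos (c₁ * v)) (-Real.sin (c₁ * v) * c₁) v :=
      (Real.hasDerivAt_cos (c₁ * v)).comp v h1
    have hsin' : HasDerivAt (fun v : ℝ => Real.sin (c₁ * v)) (Real.cos (c₁ * v) * c₁) v :=
      (Real.hasDerivAt_sin (c₁ * v)).comp v h1
    have hdiv := hcos.div hsin' hs
    have hmul := (hasDerivAt_id' (x := v)).mul hdiv
    have hfinal := (hmul.const_add (1/4 : ℝ)).sub (hasDerivAt_pow 2 v)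
    rw [hfg]
    exact hfinal
  have hcont0 : ContinuousOn f (Ioo 0 (Real.pi / c₁)) := by
    rw [hfg]
    refine (continuousOn_const.add (continuousOn_id.mul (ContinuousOn.div ?_ ?_ ?_))).sub
      ((continuous_pow 2).continuousOn)
    · exact (Real.continuous_cos.comp (continuous_const.mul continuous_id)).continuousOn
    · exact (Real.continuous_sin.comp (continuous_const.mul continuous_id)).continuousOn
    · exact fun v hv => (hsin v hv).ne'
  -- Part 1
  have hanti : StrictAntiOn f (Ioo 0 (Real.pi / c₁)) := by
    apply strictAntiOn_of_deriv_neg (convex_Ioo _ _) hcont0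
    intro v hv
    rw [interior_Ioo] at hv
    rw [(hderiv v hv).deriv]
    have hs := hsin v hv
    have ht : 0 < c₁ * v := mul_pos hc₁ hv.1
    have hlt : Real.sin (c₁ * v) < c₁ * v := Real.sin_lt ht
    have hc : Real.cos (c₁ * v) ≤ 1 := Real.cos_le_one _
    have hst : Real.cos (c₁ * v) * Real.sin (c₁ * v) < c₁ * v := by nlinarith
    have hnum : -Real.sin (c₁ * v) * c₁ * Real.sin (c₁ * v) -
        Real.cos (c₁ * v) * (Real.cos (c₁ * v) * c₁) = -c₁ := by
      linear_combination (-c₁) * Real.sin_sq_add_cos_sq (c₁ * v)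
    rw [hnum]
    have heq : 1 * (Real.cos (c₁ * v) / Real.sin (c₁ * v)) + v * (-c₁ / Real.sin (c₁ * v) ^ 2)
        - (2 : ℕ) * v ^ (2 - 1)
        = (Real.cos (c₁ * v) * Real.sin (c₁ * v) - c₁ * v) / Real.sin (c₁ * v) ^ 2 - 2 * v := by
      field_simp
      ring
    rw [heq]
    have h1 : (Real.cos (c₁ * v) * Real.sin (c₁ * v) - c₁ * v) / Real.sin (c₁ * v) ^ 2 < 0 :=
      div_neg_of_neg_of_pos (by linarith) (by positivity)
    linarith [hv.1]
  -- Part 2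
  have hlim0 : Tendsto f (nhdsWithin 0 (Ioi 0)) (nhds (1/4 + 1/c₁)) := by
    have hslope : Tendsto (fun x : ℝ => Real.sin x / x) (nhdsWithin 0 {0}ᶜ) (nhds 1) := by
      have h := hasDerivAt_iff_tendsto_slope.mp (Real.hasDerivAt_sin 0)
      rw [Real.cos_zero] at h
      refine h.congr fun y => ?_
      simp [slope_def_field]
    have h1 : Tendsto (fun v : ℝ => c₁ * v) (nhdsWithin 0 (Ioi 0)) (nhdsWithin 0 {0}ᶜ) := by
      apply tendsto_nhdsWithin_of_tendsto_nhds_of_eventually_within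
      · have := ((continuous_mul_left c₁).tendsto 0).mono_left
          (nhdsWithin_le_nhds (s := Ioi (0:ℝ)))
        simpa using this
      · filter_upwards [self_mem_nhdsWithin] with v hv
        exact (mul_pos hc₁ hv).ne'
    have h2 : Tendsto (fun v : ℝ => Real.sin (c₁ * v) / (c₁ * v)) (nhdsWithin 0 (Ioi 0))
        (nhds 1) := hslope.comp h1
    have hcos : Tendsto (fun v : ℝ => Real.cos (c₁ * v)) (nhdsWithin 0 (Ioi 0)) (nhds 1) := by
      have := ((Real.continuous_cos.comp (continuous_mul_left c₁)).tendsto 0).mono_left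
        (nhdsWithin_le_nhds (s := Ioi (0:ℝ)))
      simpa [Function.comp_def] using this
    have hsq : Tendsto (fun v : ℝ => v ^ 2) (nhdsWithin 0 (Ioi 0)) (nhds 0) := by
      have := ((continuous_pow 2).tendsto (0:ℝ)).mono_left (nhdsWithin_le_nhds (s := Ioi (0:ℝ)))
      simpa using this
    have hmain : Tendsto (fun v : ℝ =>
        1/4 + (Real.cos (c₁ * v) / c₁) * (Real.sin (c₁ * v) / (c₁ * v))⁻¹ - v ^ 2)
        (nhdsWithin 0 (Ioi 0)) (nhds (1/4 + (1 / c₁) * 1⁻¹ - 0)) :=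
      (tendsto_const_nhds.add ((hcos.div_const c₁).mul (h2.inv₀ one_ne_zero))).sub hsq
    have hmain' : Tendsto (fun v : ℝ =>
        1/4 + (Real.cos (c₁ * v) / c₁) * (Real.sin (c₁ * v) / (c₁ * v))⁻¹ - v ^ 2)
        (nhdsWithin 0 (Ioi 0)) (nhds (1/4 + 1/c₁)) := by
      convert hmain using 2; norm_num
    rw [hfg]
    refine hmain'.congr' ?_
    filter_upwards [self_mem_nhdsWithin] with v hv
    have hv0 : v ≠ 0 := ne_of_gt hv
    rcases eq_or_ne (Real.sin (c₁ * v)) 0 with hz | hz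
    · simp [hz, div_zero, inv_div, mul_comm]
    · rw [inv_div]
      field_simp
  -- Part 3
  have hlimπ : Tendsto f (nhdsWithin (Real.pi / c₁) (Iio (Real.pi / c₁))) atBot := by
    have hIoo : Ioo (0:ℝ) (Real.pi / c₁) ∈ nhdsWithin (Real.pi / c₁) (Iio (Real.pi / c₁)) :=
      Ioo_mem_nhdsLT_of_mem ⟨hπ, le_refl _⟩
    have hsin0 : Tendsto (fun v : ℝ => Real.sin (c₁ * v))
        (nhdsWithin (Real.pi / c₁) (Iio (Real.pi / c₁))) (nhdsWithin 0 (Ioi 0)) := by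
      apply tendsto_nhdsWithin_of_tendsto_nhds_of_eventually_within
      · have := ((Real.continuous_sin.comp (continuous_mul_left c₁)).tendsto
          (Real.pi / c₁)).mono_left (nhdsWithin_le_nhds (s := Iio (Real.pi / c₁)))
        simpa [Function.comp_def, mul_div_cancel₀ _ hc₁.ne', Real.sin_pi] using this
      · filter_upwards [hIoo] with v hv
        exact hsin v hv
    have hinv : Tendsto (fun v : ℝ => (Real.sin (c₁ * v))⁻¹)
        (nhdsWithin (Real.pi / c₁) (Iio (Real.pi / c₁))) atTop :=
      tendsto_inv_nhdsGT_zero.comp hsin0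
    have hcos : Tendsto (fun v : ℝ => Real.cos (c₁ * v))
        (nhdsWithin (Real.pi / c₁) (Iio (Real.pi / c₁))) (nhds (-1)) := by
      have := ((Real.continuous_cos.comp (continuous_mul_left c₁)).tendsto
        (Real.pi / c₁)).mono_left (nhdsWithin_le_nhds (s := Iio (Real.pi / c₁)))
      simpa [Function.comp_def, mul_div_cancel₀ _ hc₁.ne', Real.cos_pi] using this
    have hcot : Tendsto (fun v : ℝ => Real.cos (c₁ * v) * (Real.sin (c₁ * v))⁻¹)
        (nhdsWithin (Real.pi / c₁) (Iio (Real.pi / c₁))) atBot :=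
      hcos.neg_mul_atTop (by norm_num) hinv
    have hvc : Tendsto (fun v : ℝ => v)
        (nhdsWithin (Real.pi / c₁) (Iio (Real.pi / c₁))) (nhds (Real.pi / c₁)) :=
      tendsto_id.mono_left (nhdsWithin_le_nhds (s := Iio (Real.pi / c₁)))
    have hmul : Tendsto (fun v : ℝ => v * (Real.cos (c₁ * v) * (Real.sin (c₁ * v))⁻¹))
        (nhdsWithin (Real.pi / c₁) (Iio (Real.pi / c₁))) atBot :=
      hvc.pos_mul_atBot hπ hcot
    have hrest : Tendsto (fun v : ℝ => 1/4 - v ^ 2)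
        (nhdsWithin (Real.pi / c₁) (Iio (Real.pi / c₁))) (nhds (1/4 - (Real.pi / c₁) ^ 2)) :=
      (tendsto_const_nhds.sub ((continuous_pow 2).tendsto _)).mono_left (nhdsWithin_le_nhds (s := Iio (Real.pi / c₁)))
    have hsum : Tendsto (fun v : ℝ =>
        (1/4 - v ^ 2) + v * (Real.cos (c₁ * v) * (Real.sin (c₁ * v))⁻¹))
        (nhdsWithin (Real.pi / c₁) (Iio (Real.pi / c₁))) atBot := by
      apply tendsto_atBot_add_left_of_ge' _ (1/4 - (Real.pi / c₁) ^ 2 + 1) _ hmul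
      exact hrest.eventually (eventually_le_nhds (lt_add_one _))
    rw [hfg]
    refine hsum.congr fun v => ?_
    rw [div_eq_mul_inv]; ring
  -- the sup bound
  have hbound : ∀ v ∈ Ioo (0:ℝ) (Real.pi / c₁), f v < 1/4 + 1/c₁ := by
    intro v hv
    have hv2 : v / 2 ∈ Ioo (0:ℝ) (Real.pi / c₁) :=
      ⟨by linarith [hv.1], by linarith [hv.1, hv.2]⟩
    have h1 : f v < f (v / 2) := hanti hv2 hv (by linarith [hv.1])
    have h2 : f (v / 2) ≤ 1/4 + 1/c₁ := by
      apply ge_of_tendsto hlim0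
      filter_upwards [Ioo_mem_nhdsGT_of_mem ⟨le_refl (0:ℝ), half_pos hv.1⟩] with w hw
      exact (hanti ⟨hw.1, lt_trans hw.2 hv2.2⟩ hv2 hw.2).le
    linarith
  refine ⟨hanti, hlim0, hlimπ, ?_, ?_⟩
  · intro u hu
    have hA : ∀ᶠ v in nhdsWithin 0 (Ioi (0:ℝ)), u ^ 2 < f v :=
      hlim0.eventually (eventually_gt_nhds hu)
    have hA' : ∀ᶠ v in nhdsWithin 0 (Ioi (0:ℝ)), v ∈ Ioo (0:ℝ) (Real.pi / c₁) := by
      filter_upwards [Ioo_mem_nhdsGT_of_mem ⟨le_refl (0:ℝ), hπ⟩] with v hv using hv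
    obtain ⟨a, ha1, ha2⟩ := (hA.and hA').exists
    have hB : ∀ᶠ v in nhdsWithin (Real.pi / c₁) (Iio (Real.pi / c₁)), f v < u ^ 2 :=
      hlimπ.eventually (eventually_lt_atBot (u ^ 2))
    have hB' : ∀ᶠ v in nhdsWithin (Real.pi / c₁) (Iio (Real.pi / c₁)),
        v ∈ Ioo a (Real.pi / c₁) := by
      filter_upwards [Ioo_mem_nhdsLT_of_mem ⟨ha2.2, le_refl _⟩] with v hv using hv
    obtain ⟨b, hb1, hb2⟩ := (hB.and hB').exists
    have hab : a ≤ b := hb2.1.le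
    have hsub : Icc a b ⊆ Ioo (0:ℝ) (Real.pi / c₁) := fun x hx =>
      ⟨lt_of_lt_of_le ha2.1 hx.1, lt_of_le_of_lt hx.2 hb2.2⟩
    have hivt := intermediate_value_Icc' hab (hcont0.mono hsub)
    obtain ⟨v, hv, hfv⟩ := hivt ⟨hb1.le, ha1.le⟩
    have hvmem : v ∈ Ioo (0:ℝ) (Real.pi / c₁) := hsub hv
    refine ⟨v, ⟨hvmem, hfv.symm⟩, ?_⟩
    rintro w ⟨hw, hwe⟩
    exact hanti.injOn hw hvmem (hwe.symm.trans hfv.symm)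
  · rintro u hu ⟨v, hv, he⟩
    have := hbound v hv
    rw [hfdef] at this
    simp only at this
    linarith [he ▸ this]
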